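/- Let V be a k-dimensional real vector space of functions on a Cayley graph (G,S), each of polynomial growth of rate ≤ d (|u(x)| ≤ C_u(d^S(p,x)+1)^d), such that for R ≥ R₁ the bilinear form A_R(u,v) = Σ_{x∈B_p(R)} u(x)v(x) is an inner product on V. Assume β_S(n) ≥ C₁n^D and β_S(n) ≤ C₂n^D for all n ≥ 1. Then for any β > 1, δ > 0, and any R₁' ≥ R₁, there exists R > R₁' such that for every A_{βR}-orthonormal basis {u_i} of V: Σᵢ A_R(u_i,u_i) ≥ k·β^{−(2d+D+δ)}. -/

import Mathlib

noncomputable def wordDist {G : Type*} [Group G] (S : Set G) (x y : G) : ℕ :=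
  sInf {n | ∃ l : List G, l.length = n ∧ (∀ g ∈ l, g ∈ S) ∧ x * l.prod = y}

noncomputable def growth {G : Type*} [Group G] (S : Set G) (n : ℕ) : ℕ :=
  {x : G | wordDist S 1 x ≤ n}.ncard

/-- `A_R(u,v) = Σ_{x ∈ B_p(R)} u(x) v(x)`. -/
noncomputable def bilA {G : Type*} [Group G] (S : Set G) (p : G) (R : ℝ)
    (u v : G → ℝ) : ℝ :=
  ∑ᶠ x ∈ {x : G | wordDist S p x ≤ ⌊R⌋₊}, u x * v x


section Aux
variable {G : Type*} [Group G] {S : Set G}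

lemma exists_word (hSsym : ∀ s ∈ S, s⁻¹ ∈ S) (hSgen : Subgroup.closure S = ⊤) (x y : G) :
    ∃ l : List G, (∀ g ∈ l, g ∈ S) ∧ x * l.prod = y := by
  have hx : x⁻¹ * y ∈ Subgroup.closure S := by rw [hSgen]; trivial
  have hx' : x⁻¹ * y ∈ (Subgroup.closure S).toSubmonoid := hx
  rw [Subgroup.closure_toSubmonoid] at hx'
  obtain ⟨l, hl, hprod⟩ := Submonoid.exists_list_of_mem_closure hx'
  refine ⟨l, fun g hg => ?_, by rw [hprod, mul_inv_cancel_left]⟩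
  rcases hl g hg with h | h
  · exact h
  · simpa using hSsym _ h

lemma wordDist_spec (hSsym : ∀ s ∈ S, s⁻¹ ∈ S) (hSgen : Subgroup.closure S = ⊤) (x y : G) :
    ∃ l : List G, l.length = wordDist S x y ∧ (∀ g ∈ l, g ∈ S) ∧ x * l.prod = y := by
  obtain ⟨l, hmem, hprod⟩ := exists_word hSsym hSgen x y
  have hne : {n | ∃ l : List G, l.length = n ∧ (∀ g ∈ l, g ∈ S) ∧ x * l.prod = y}.Nonempty :=
    ⟨l.length, l, rfl, hmem, hprod⟩
  have := Nat.sInf_mem hne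
  obtain ⟨l', h1, h2, h3⟩ := this
  exact ⟨l', h1, h2, h3⟩

lemma listset_finite (hSfin : S.Finite) (n : ℕ) :
    {l : List G | l.length ≤ n ∧ ∀ g ∈ l, g ∈ S}.Finite := by
  have : Finite ↥S := hSfin
  have h := List.finite_length_le ↥S n
  refine (h.image (List.map (Subtype.val))).subset ?_
  rintro l ⟨hlen, hmem⟩
  refine ⟨l.attach.map (fun g => (⟨g.1, hmem _ g.2⟩ : ↥S)), by simpa using hlen, ?_⟩
  simp [List.map_map, Function.comp]

lemma ball_finite (hSfin : S.Finite) (hSsym : ∀ s ∈ S, s⁻¹ ∈ S)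
    (hSgen : Subgroup.closure S = ⊤) (p : G) (n : ℕ) :
    {x : G | wordDist S p x ≤ n}.Finite := by
  refine ((listset_finite hSfin n).image (fun l => p * l.prod)).subset ?_
  intro x hx
  obtain ⟨l, hlen, hmem, hprod⟩ := wordDist_spec hSsym hSgen p x
  exact ⟨l, ⟨by rw [hlen]; exact hx, hmem⟩, hprod⟩

lemma wordDist_eq_one (p x : G) : wordDist S p x = wordDist S 1 (p⁻¹ * x) := by
  unfold wordDist
  congr 1
  ext n
  constructor <;> rintro ⟨l, h1, h2, h3⟩ <;> refine ⟨l, h1, h2, ?_⟩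
  · rw [one_mul, ← h3, inv_mul_cancel_left]
  · rw [one_mul] at h3; rw [h3, mul_inv_cancel_left]

lemma ball_ncard (p : G) (n : ℕ) :
    {x : G | wordDist S p x ≤ n}.ncard = growth S n := by
  have : {x : G | wordDist S p x ≤ n} = (fun y => p * y) '' {x : G | wordDist S 1 x ≤ n} := by
    ext x
    simp only [Set.mem_setOf_eq, Set.mem_image]
    constructor
    · intro hx
      exact ⟨p⁻¹ * x, by rwa [← wordDist_eq_one], by simp⟩
    · rintro ⟨y, hy, rfl⟩
      rwa [wordDist_eq_one, inv_mul_cancel_left]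
  rw [this, Set.ncard_image_of_injective _ (mul_right_injective p)]
  rfl

end Aux

section Aux2
variable {G : Type*} [Group G] {S : Set G} {p : G}
variable (hSfin : S.Finite) (hSsym : ∀ s ∈ S, s⁻¹ ∈ S) (hSgen : Subgroup.closure S = ⊤)
include hSfin hSsym hSgen
open Matrix

lemma bilA_eq_sum (R : ℝ) (u v : G → ℝ) :
    bilA S p R u v = ∑ x ∈ (ball_finite hSfin hSsym hSgen p ⌊R⌋₊).toFinset, u x * v x := by
  rw [bilA, finsum_mem_eq_finite_toFinset_sum _ (ball_finite hSfin hSsym hSgen p ⌊R⌋₊)]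

omit hSfin hSsym hSgen in
lemma sum_mul_sum_comm {ι : Type*} [Fintype ι] (T : Finset G) (f g : ι → G → ℝ) :
    ∑ x ∈ T, (∑ i, f i x) * (∑ j, g j x) = ∑ i, ∑ j, ∑ x ∈ T, f i x * g j x := by
  simp_rw [Finset.sum_mul_sum]
  rw [Finset.sum_comm]
  exact Finset.sum_congr rfl fun i _ => Finset.sum_comm

lemma bilA_combo (R : ℝ) {k : ℕ} (c₁ c₂ : Fin k → ℝ) (v w : Fin k → G → ℝ) :
    bilA S p R (∑ i, c₁ i • v i) (∑ j, c₂ j • w j)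
      = ∑ i, ∑ j, c₁ i * c₂ j * bilA S p R (v i) (w j) := by
  rw [bilA_eq_sum hSfin hSsym hSgen]
  simp only [Finset.sum_apply, Pi.smul_apply, smul_eq_mul]
  rw [sum_mul_sum_comm]
  refine Finset.sum_congr rfl fun i _ => Finset.sum_congr rfl fun j _ => ?_
  rw [bilA_eq_sum hSfin hSsym hSgen, Finset.mul_sum]
  exact Finset.sum_congr rfl fun x _ => by ring

lemma bilA_sum_smul_left (R : ℝ) {k : ℕ} (cc : Fin k → ℝ) (v : Fin k → G → ℝ) (w : G → ℝ) :
    bilA S p R (∑ i, cc i • v i) w = ∑ i, cc i * bilA S p R (v i) w := by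
  rw [bilA_eq_sum hSfin hSsym hSgen]
  simp only [Finset.sum_apply, Pi.smul_apply, smul_eq_mul, Finset.sum_mul]
  rw [Finset.sum_comm]
  refine Finset.sum_congr rfl fun i _ => ?_
  rw [bilA_eq_sum hSfin hSsym hSgen, Finset.mul_sum]
  exact Finset.sum_congr rfl fun x _ => by ring

omit hSfin hSsym hSgen in
noncomputable def gramMat (S : Set G) (p : G) (R : ℝ) {k : ℕ} (v : Fin k → G → ℝ) :
    Matrix (Fin k) (Fin k) ℝ := Matrix.of fun i j => bilA S p R (v i) (v j)

lemma gram_conj (R : ℝ) {k : ℕ} (e : Fin k → G → ℝ) (P : Matrix (Fin k) (Fin k) ℝ) :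
    gramMat S p R (fun j => ∑ i, P i j • e i) = Pᵀ * gramMat S p R e * P := by
  ext a b
  show bilA S p R (∑ i, P i a • e i) (∑ j, P j b • e j) = _
  rw [bilA_combo hSfin hSsym hSgen]
  simp only [Matrix.mul_apply, Matrix.transpose_apply, Finset.sum_mul]
  conv_rhs => rw [Finset.sum_comm]
  refine Finset.sum_congr rfl fun i _ => Finset.sum_congr rfl fun j _ => ?_
  show P i a * P j b * bilA S p R (e i) (e j) = P i a * bilA S p R (e i) (e j) * P j b
  ring

lemma gram_posdef {K : Submodule ℝ (G → ℝ)} {R₁ : ℝ}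
    (hinner : ∀ R : ℝ, R₁ ≤ R → ∀ u ∈ K, u ≠ 0 → 0 < bilA S p R u u)
    {R : ℝ} (hR : R₁ ≤ R) {k : ℕ} {v : Fin k → G → ℝ} (hv : ∀ i, v i ∈ K)
    (hind : ∀ c : Fin k → ℝ, ∑ i, c i • v i = 0 → c = 0) :
    (gramMat S p R v).PosDef := by
  refine Matrix.posDef_iff_dotProduct_mulVec.mpr ⟨?_, ?_⟩
  · ext i j
    show star (gramMat S p R v j i) = gramMat S p R v i j
    rw [star_trivial]
    show bilA S p R (v j) (v i) = bilA S p R (v i) (v j)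
    rw [bilA_eq_sum hSfin hSsym hSgen, bilA_eq_sum hSfin hSsym hSgen]
    exact Finset.sum_congr rfl fun x _ => mul_comm _ _
  · intro x hx
    have hw : (∑ i, x i • v i) ≠ 0 := fun h => hx (hind x h)
    have hwK : (∑ i, x i • v i) ∈ K :=
      Submodule.sum_mem _ fun i _ => Submodule.smul_mem _ _ (hv i)
    have hpos := hinner R hR _ hwK hw
    rw [bilA_combo hSfin hSsym hSgen] at hpos
    convert hpos using 1
    case e'_2 => rfl
    simp only [star_trivial, dotProduct, Matrix.mulVec, Finset.mul_sum]
    refine Finset.sum_congr rfl fun i _ => Finset.sum_congr rfl fun j _ => ?_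
    show x i * (gramMat S p R v i j * x j) = x i * x j * gramMat S p R v i j
    ring

end Aux2

section AMGM

lemma trace_eq_sum_eigen {k : ℕ} {M : Matrix (Fin k) (Fin k) ℝ} (hM : M.IsHermitian) :
    M.trace = ∑ i, hM.eigenvalues i := by
  rw [hM.trace_eq_sum_eigenvalues]
  simp

lemma posdef_det_le {k : ℕ} (hk : 1 ≤ k) {M : Matrix (Fin k) (Fin k) ℝ} (hM : M.PosDef) :
    M.det ≤ (M.trace / k) ^ k := by
  have hkR : (0:ℝ) < k := by exact_mod_cast hk
  have hμpos : ∀ i, 0 < hM.1.eigenvalues i := hM.eigenvalues_pos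
  have hdet : M.det = ∏ i, hM.1.eigenvalues i := by
    exact_mod_cast hM.1.det_eq_prod_eigenvalues
  have htr : M.trace = ∑ i, hM.1.eigenvalues i := trace_eq_sum_eigen hM.1
  have hgm := Real.geom_mean_le_arith_mean_weighted Finset.univ (fun _ => (k:ℝ)⁻¹)
      (fun i => hM.1.eigenvalues i) (fun i _ => by positivity)
      (by simp; field_simp) (fun i _ => (hμpos i).le)
  have hP : (0:ℝ) < ∏ i, hM.1.eigenvalues i := Finset.prod_pos fun i _ => hμpos i
  have hL : ∏ i, (hM.1.eigenvalues i) ^ ((k:ℝ)⁻¹)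
      = (∏ i, hM.1.eigenvalues i) ^ ((k:ℝ)⁻¹) := by
    rw [← Real.finset_prod_rpow _ _ (fun i _ => (hμpos i).le)]
  have hRhs : ∑ i : Fin k, (k:ℝ)⁻¹ * hM.1.eigenvalues i = M.trace / k := by
    rw [htr, ← Finset.mul_sum]; ring
  rw [hL, hRhs] at hgm
  have h2 : ((∏ i, hM.1.eigenvalues i) ^ ((k:ℝ)⁻¹)) ^ k ≤ (M.trace / k) ^ k :=
    pow_le_pow_left₀ (Real.rpow_nonneg hP.le _) hgm k
  rwa [← Real.rpow_natCast ((∏ i, hM.1.eigenvalues i) ^ ((k:ℝ)⁻¹)) k,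
    ← Real.rpow_mul hP.le, inv_mul_cancel₀ hkR.ne', Real.rpow_one, ← hdet] at h2

end AMGM



set_option maxHeartbeats 2000000 in
open Matrix in
theorem lower_bound_for_orthonormal_basis {G : Type*} [Group G]
    (S : Set G) (hSfin : S.Finite) (hSsym : ∀ s ∈ S, s⁻¹ ∈ S)
    (hSgen : Subgroup.closure S = ⊤) (p : G)
    (D : ℕ) (C₁ C₂ : ℝ) (hC₁ : 0 < C₁) (hC₂ : 0 < C₂)
    (hlow : ∀ n : ℕ, 1 ≤ n → C₁ * (n : ℝ) ^ D ≤ (growth S n : ℝ))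
    (hup : ∀ n : ℕ, 1 ≤ n → (growth S n : ℝ) ≤ C₂ * (n : ℝ) ^ D)
    (d : ℝ) (hd : 0 ≤ d)
    (K : Submodule ℝ (G → ℝ)) [FiniteDimensional ℝ K] (k : ℕ) (hk : 1 ≤ k)
    (hdim : Module.finrank ℝ K = k)
    (hgrowth : ∀ u ∈ K, ∃ Cu : ℝ, ∀ x : G,
      |u x| ≤ Cu * ((wordDist S p x : ℝ) + 1) ^ d)
    (R₁ : ℝ) (hR₁ : 1 ≤ R₁)
    (hinner : ∀ R : ℝ, R₁ ≤ R → ∀ u ∈ K, u ≠ 0 → 0 < bilA S p R u u) :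
    ∀ (β δ R₁' : ℝ), 1 < β → 0 < δ → R₁ ≤ R₁' →
      ∃ R : ℝ, R₁' < R ∧ ∀ u : Fin k → G → ℝ,
        (∀ i, u i ∈ K) →
        (∀ i j, bilA S p (β * R) (u i) (u j) = if i = j then 1 else 0) →
        (k : ℝ) * β ^ (-(2 * d + (D : ℝ) + δ)) ≤ ∑ i, bilA S p R (u i) (u i) := by
  intro β δ R₁' hβ hδ hR₁'
  by_contra hcon
  push_neg at hcon
  have hβ0 : (0:ℝ) < β := lt_trans zero_lt_one hβ
  have hk0 : (0:ℝ) < (k:ℝ) := by exact_mod_cast hk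
  have hne : Nonempty (Fin k) := ⟨⟨0, hk⟩⟩
  set c : ℝ := 2 * d + (D:ℝ) + δ with hc
  -- fixed basis of K
  let bK : Module.Basis (Fin k) ℝ K := Module.finBasisOfFinrankEq ℝ K hdim
  set e : Fin k → G → ℝ := fun i => ((bK i : K) : G → ℝ) with he
  have heK : ∀ i, e i ∈ K := fun i => (bK i).2
  have hind_e : ∀ cc : Fin k → ℝ, ∑ i, cc i • e i = 0 → cc = 0 := by
    intro cc h
    have h0 : ∑ i, cc i • bK i = 0 := by
      apply Subtype.val_injective
      have hcoe : ((∑ i, cc i • bK i : K) : G → ℝ) = ∑ i, cc i • e i := by simp [he]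
      rw [hcoe, h]
      simp
    have h1 := Fintype.linearIndependent_iff.mp bK.linearIndependent cc h0
    funext i; exact h1 i
  set f : ℝ → ℝ := fun R => (gramMat S p R e).det with hf
  have hfposd : ∀ R : ℝ, R₁ ≤ R → 0 < f R := fun R hR =>
    (gram_posdef hSfin hSsym hSgen hinner hR heK hind_e).det_pos
  have hbz : ∀ (R' : ℝ) (v : G → ℝ), bilA S p R' 0 v = 0 := by
    intro R' v; rw [bilA_eq_sum hSfin hSsym hSgen]; simp
  -- the key step
  have hstep : ∀ R : ℝ, R₁' < R → β ^ (c * (k:ℝ)) * f R < f (β * R) := by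
    intro R hRgt
    obtain ⟨u, huK, huon, husum⟩ := hcon R hRgt
    have hRR₁ : R₁ ≤ R := le_trans hR₁' hRgt.le
    have hR1 : (1:ℝ) ≤ R := le_trans hR₁ hRR₁
    have hβR : R₁ ≤ β * R := le_trans hRR₁ (by nlinarith)
    have hune : ∀ i, u i ≠ 0 := by
      intro i h0
      have h1 := huon i i
      rw [h0, hbz] at h1
      simp at h1
    have hind_u : ∀ cc : Fin k → ℝ, ∑ i, cc i • u i = 0 → cc = 0 := by
      intro cc h
      funext j
      have h2 := congrArg (fun w => bilA S p (β * R) w (u j)) h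
      try simp only at h2
      rw [hbz] at h2
      rw [bilA_sum_smul_left hSfin hSsym hSgen] at h2
      simp only [huon] at h2
      simpa using h2
    set P : Matrix (Fin k) (Fin k) ℝ := Matrix.of (fun i j => (bK.repr ⟨u j, huK j⟩) i)
      with hPdef
    have hrep : u = fun j => ∑ i, P i j • e i := by
      funext j
      have h5 := bK.sum_repr ⟨u j, huK j⟩
      have h6 : u j = ((∑ i, bK.repr ⟨u j, huK j⟩ i • bK i : K) : G → ℝ) := by
        rw [h5]
      rw [h6]
      simp [he, hPdef]
      exact (congrArg Subtype.val h5).symm.trans (by simp only [Submodule.coe_sum, Submodule.coe_smul])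
    have hgram : ∀ R' : ℝ, gramMat S p R' u = Pᵀ * gramMat S p R' e * P := by
      intro R'
      conv_lhs => rw [hrep]
      exact gram_conj hSfin hSsym hSgen R' e P
    have hone : gramMat S p (β*R) u = 1 := by
      ext i j
      show bilA S p (β*R) (u i) (u j) = _
      rw [huon i j]
      by_cases hij : i = j <;> simp [hij, Matrix.one_apply]
    have hdet1 : P.det ^ 2 * f (β*R) = 1 := by
      have h7 := congrArg Matrix.det (hgram (β*R))
      rw [hone, Matrix.det_one, Matrix.det_mul, Matrix.det_mul, Matrix.det_transpose] at h7
      simp only [hf]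
      nlinarith [h7]
    have hdetM : (gramMat S p R u).det = P.det ^ 2 * f R := by
      rw [hgram R, Matrix.det_mul, Matrix.det_mul, Matrix.det_transpose]
      simp only [hf]; ring
    have hMpos : (gramMat S p R u).PosDef :=
      gram_posdef hSfin hSsym hSgen hinner hRR₁ huK hind_u
    have htrace : (gramMat S p R u).trace = ∑ i, bilA S p R (u i) (u i) := by
      simp [Matrix.trace, Matrix.diag, gramMat]
    have htpos : (0:ℝ) < (gramMat S p R u).trace := by
      rw [htrace]
      exact Finset.sum_pos (fun i _ => hinner R hRR₁ (u i) (huK i) (hune i)) Finset.univ_nonempty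
    have htr_lt : (gramMat S p R u).trace / k < β ^ (-c) := by
      rw [div_lt_iff₀ hk0, htrace, mul_comm]
      exact husum
    have hdetlt : (gramMat S p R u).det < (β ^ (-c)) ^ k :=
      lt_of_le_of_lt (posdef_det_le hk hMpos)
        (pow_lt_pow_left₀ htr_lt (le_of_lt (div_pos htpos hk0)) (by omega))
    have hfβR := hfposd (β*R) hβR
    have hfR := hfposd R hRR₁
    have hfRlt : f R < (β ^ (-c))^k * f (β*R) := by
      have h8 : P.det^2 * f R < (β^(-c))^k := by rw [← hdetM]; exact hdetlt
      calc f R = (P.det^2 * f R) * f (β*R) := by nlinarith [hdet1]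
        _ < (β^(-c))^k * f (β*R) := mul_lt_mul_of_pos_right h8 hfβR
    have hpowk : (β ^ (-c))^k = β ^ (-(c * (k:ℝ))) := by
      rw [← Real.rpow_natCast (β ^ (-c)) k, ← Real.rpow_mul hβ0.le]
      ring_nf
    calc β ^ (c * (k:ℝ)) * f R
        < β ^ (c*(k:ℝ)) * ((β ^ (-c))^k * f (β*R)) :=
          mul_lt_mul_of_pos_left hfRlt (Real.rpow_pos_of_pos hβ0 _)
      _ = f (β*R) := by
          rw [hpowk, ← mul_assoc, ← Real.rpow_add hβ0]
          simp
  -- iteration setup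
  set R₀ : ℝ := R₁' + 1 with hR₀def
  have hR₁R₁' : (1:ℝ) ≤ R₁' := le_trans hR₁ hR₁'
  have hR₀1 : (1:ℝ) ≤ R₀ := by rw [hR₀def]; linarith
  have hR₀pos : (0:ℝ) < R₀ := by linarith
  have hR₀gt : R₁' < R₀ := by rw [hR₀def]; linarith
  have hβm : ∀ m : ℕ, (1:ℝ) ≤ β ^ m := fun m => one_le_pow₀ hβ.le
  have hRm1 : ∀ m : ℕ, (1:ℝ) ≤ β ^ m * R₀ := by
    intro m; nlinarith [hβm m]
  have hRmgt : ∀ m : ℕ, R₁' < β ^ m * R₀ :=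
    fun m => lt_of_lt_of_le hR₀gt (le_mul_of_one_le_left hR₀pos.le (hβm m))
  have hRmR₁ : ∀ m : ℕ, R₁ ≤ β ^ m * R₀ := fun m => le_trans hR₁' (hRmgt m).le
  have hiter : ∀ m : ℕ, β ^ (c * (k:ℝ) * (m:ℝ)) * f R₀ ≤ f (β ^ m * R₀) := by
    intro m
    induction m with
    | zero => simp
    | succ n ih =>
      have h1 := hstep (β ^ n * R₀) (hRmgt n)
      have h2 : β ^ (n+1) * R₀ = β * (β ^ n * R₀) := by ring
      rw [h2]
      have h3 : β ^ (c*(k:ℝ)) * (β ^ (c * (k:ℝ) * (n:ℝ)) * f R₀)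
          ≤ β ^ (c*(k:ℝ)) * f (β ^ n * R₀) :=
        mul_le_mul_of_nonneg_left ih (Real.rpow_nonneg hβ0.le _)
      have hexp : c*(k:ℝ) + c*(k:ℝ)*(n:ℝ) = c*(k:ℝ)*(((n:ℕ)+1:ℕ):ℝ) := by push_cast; ring
      have h4 : β ^ (c*(k:ℝ)) * (β ^ (c*(k:ℝ)*(n:ℝ)) * f R₀)
          = β ^ (c*(k:ℝ)*(((n:ℕ)+1:ℕ):ℝ)) * f R₀ := by
        rw [← mul_assoc, ← Real.rpow_add hβ0, hexp]
      calc β ^ (c*(k:ℝ)*(((n:ℕ)+1:ℕ):ℝ)) * f R₀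
          = β ^ (c*(k:ℝ)) * (β ^ (c*(k:ℝ)*(n:ℝ)) * f R₀) := h4.symm
        _ ≤ β ^ (c*(k:ℝ)) * f (β^n*R₀) := h3
        _ ≤ f (β * (β^n*R₀)) := h1.le
  -- growth constants for the basis
  choose Cg hCg using fun i => hgrowth (e i) (heK i)
  have hwpos : ∀ x : G, (0:ℝ) < ((wordDist S p x : ℝ) + 1) ^ d := fun x =>
    Real.rpow_pos_of_pos (by positivity) d
  have hCgnn : ∀ i, 0 ≤ Cg i := by
    intro i
    by_contra hneg
    push_neg at hneg
    have := hCg i p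
    nlinarith [abs_nonneg (e i p), hwpos p]
  set CC : ℝ := 1 + ∑ i, Cg i with hCCdef
  have hsumnn : (0:ℝ) ≤ ∑ i, Cg i := Finset.sum_nonneg fun i _ => hCgnn i
  have hCCpos : 0 < CC := by rw [hCCdef]; linarith
  have hCgle : ∀ i, Cg i ≤ CC := by
    intro i
    have h1 : Cg i ≤ ∑ j, Cg j := Finset.single_le_sum (fun j _ => hCgnn j) (Finset.mem_univ i)
    rw [hCCdef]; linarith
  -- entry bound
  have hentry : ∀ R : ℝ, 1 ≤ R → ∀ i j,
      |gramMat S p R e i j| ≤ CC^2 * ((R+1)^d)^2 * (C₂ * R ^ D) := by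
    intro R hR i j
    have hR0 : (0:ℝ) ≤ R := by linarith
    have hfl : (⌊R⌋₊:ℝ) ≤ R := Nat.floor_le hR0
    have hfl1 : 1 ≤ ⌊R⌋₊ := Nat.le_floor (by exact_mod_cast hR)
    have hR1nn : (0:ℝ) ≤ (R+1)^d := Real.rpow_nonneg (by linarith) d
    have hxb : ∀ x ∈ (ball_finite hSfin hSsym hSgen p ⌊R⌋₊).toFinset,
        |e i x * e j x| ≤ CC * (R+1)^d * (CC * (R+1)^d) := by
      intro x hx
      have hxm : wordDist S p x ≤ ⌊R⌋₊ := by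
        simpa using (Set.Finite.mem_toFinset _).mp hx
      have hwle : ((wordDist S p x : ℝ) + 1) ^ d ≤ (R+1)^d := by
        apply Real.rpow_le_rpow (by positivity) _ hd
        have h9 : (wordDist S p x : ℝ) ≤ (⌊R⌋₊:ℝ) := by exact_mod_cast hxm
        linarith
      have hb : ∀ i', |e i' x| ≤ CC * (R+1)^d := by
        intro i'
        calc |e i' x| ≤ Cg i' * ((wordDist S p x : ℝ) + 1) ^ d := hCg i' x
          _ ≤ CC * (R+1)^d := by nlinarith [hwpos x, hCgle i', hCgnn i']
      rw [abs_mul]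
      exact mul_le_mul (hb i) (hb j) (abs_nonneg _) (by positivity)
    calc |gramMat S p R e i j|
        = |∑ x ∈ (ball_finite hSfin hSsym hSgen p ⌊R⌋₊).toFinset, e i x * e j x| := by
          rw [show gramMat S p R e i j = bilA S p R (e i) (e j) from rfl,
            bilA_eq_sum hSfin hSsym hSgen]
      _ ≤ ∑ x ∈ (ball_finite hSfin hSsym hSgen p ⌊R⌋₊).toFinset, |e i x * e j x| :=
          Finset.abs_sum_le_sum_abs _ _
      _ ≤ ∑ _x ∈ (ball_finite hSfin hSsym hSgen p ⌊R⌋₊).toFinset,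
            CC * (R+1)^d * (CC * (R+1)^d) := Finset.sum_le_sum hxb
      _ = ((ball_finite hSfin hSsym hSgen p ⌊R⌋₊).toFinset.card : ℝ)
            * (CC * (R+1)^d * (CC * (R+1)^d)) := by
          rw [Finset.sum_const, nsmul_eq_mul]
      _ ≤ (C₂ * R ^ D) * (CC * (R+1)^d * (CC * (R+1)^d)) := by
          apply mul_le_mul_of_nonneg_right _ (by positivity)
          have hcard : ((ball_finite hSfin hSsym hSgen p ⌊R⌋₊).toFinset.card : ℕ)
              = growth S ⌊R⌋₊ := by
            rw [← ball_ncard p ⌊R⌋₊, Set.ncard_eq_toFinset_card _ (ball_finite hSfin hSsym hSgen p ⌊R⌋₊)]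
          rw [hcard]
          calc (growth S ⌊R⌋₊ : ℝ) ≤ C₂ * (⌊R⌋₊:ℝ)^D := hup _ hfl1
            _ ≤ C₂ * R ^ D := by
                exact mul_le_mul_of_nonneg_left (pow_le_pow_left₀ (by positivity) hfl D) hC₂.le
      _ = CC^2 * ((R+1)^d)^2 * (C₂ * R ^ D) := by ring
  -- determinant upper bound
  have hdetb : ∀ R : ℝ, 1 ≤ R →
      f R ≤ (Nat.factorial k : ℝ) * (CC^2 * ((R+1)^d)^2 * (C₂ * R ^ D))^k := by
    intro R hR
    have h := Matrix.det_le (A := gramMat S p R e) (abv := AbsoluteValue.abs)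
      (fun i j => hentry R hR i j)
    calc f R ≤ |f R| := le_abs_self _
      _ ≤ (Nat.factorial k : ℝ) * (CC^2 * ((R+1)^d)^2 * (C₂ * R ^ D))^k := by
          simpa [Fintype.card_fin, nsmul_eq_mul] using h
  set A₀ : ℝ := CC^2 * ((2:ℝ) ^ d)^2 * C₂ with hA₀def
  have h2dpos : (0:ℝ) < (2:ℝ)^d := Real.rpow_pos_of_pos (by norm_num) d
  have hA₀pos : 0 < A₀ := by rw [hA₀def]; positivity
  have hEb : ∀ m : ℕ, CC^2 * ((β^m*R₀+1)^d)^2 * (C₂ * (β^m*R₀) ^ D)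
      ≤ A₀ * ((β^m*R₀) ^ (2*d + (D:ℝ))) := by
    intro m
    have hRm1' : (1:ℝ) ≤ β^m*R₀ := hRm1 m
    have hRmpos : (0:ℝ) < β^m*R₀ := by linarith
    have h1 : (β^m*R₀+1)^d ≤ (2*(β^m*R₀))^d :=
      Real.rpow_le_rpow (by linarith) (by linarith) hd
    have h2 : ((β^m*R₀+1)^d)^2 ≤ ((2*(β^m*R₀))^d)^2 :=
      pow_le_pow_left₀ (Real.rpow_nonneg (by linarith) d) h1 2
    have h3 : ((2*(β^m*R₀))^d)^2 = ((2:ℝ)^d)^2 * ((β^m*R₀)^d)^2 := by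
      rw [Real.mul_rpow (by norm_num) hRmpos.le]; ring
    have h5 : (β^m*R₀:ℝ) ^ D = (β^m*R₀) ^ ((D:ℕ):ℝ) := (Real.rpow_natCast _ D).symm
    have h4 : ((β^m*R₀)^d)^2 * (β^m*R₀) ^ ((D:ℕ):ℝ) = (β^m*R₀) ^ (2*d + (D:ℝ)) := by
      rw [sq, ← Real.rpow_add hRmpos, ← Real.rpow_add hRmpos]
      congr 1
      ring
    calc CC^2 * ((β^m*R₀+1)^d)^2 * (C₂ * (β^m*R₀) ^ D)
        ≤ CC^2 * (((2:ℝ)^d)^2 * ((β^m*R₀)^d)^2) * (C₂ * (β^m*R₀) ^ D) := by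
          rw [← h3]
          have := mul_le_mul_of_nonneg_left h2 (by positivity : (0:ℝ) ≤ CC^2)
          exact mul_le_mul_of_nonneg_right this (by positivity)
      _ = A₀ * (((β^m*R₀)^d)^2 * (β^m*R₀) ^ ((D:ℕ):ℝ)) := by
          rw [hA₀def, ← h5]; ring
      _ = A₀ * ((β^m*R₀) ^ (2*d + (D:ℝ))) := by rw [h4]
  set B : ℝ := (Nat.factorial k : ℝ) * A₀^k * R₀ ^ ((2*d+(D:ℝ))*(k:ℝ)) with hBdef
  have hfinal : ∀ m : ℕ, f (β^m * R₀) ≤ B * β ^ ((2*d+(D:ℝ)) * (k:ℝ) * (m:ℝ)) := by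
    intro m
    have hRm1' : (1:ℝ) ≤ β^m*R₀ := hRm1 m
    have hRmpos : (0:ℝ) < β^m*R₀ := by linarith
    have h1 := hdetb (β^m*R₀) hRm1'
    have hEnn : (0:ℝ) ≤ CC^2 * ((β^m*R₀+1)^d)^2 * (C₂ * (β^m*R₀) ^ D) := by positivity
    have h2 : (CC^2 * ((β^m*R₀+1)^d)^2 * (C₂ * (β^m*R₀) ^ D))^k
        ≤ (A₀ * ((β^m*R₀) ^ (2*d+(D:ℝ))))^k := pow_le_pow_left₀ hEnn (hEb m) k
    have h4 : ((β^m*R₀) ^ (2*d+(D:ℝ)))^k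
        = β ^ ((2*d+(D:ℝ))*(k:ℝ)*(m:ℝ)) * R₀ ^ ((2*d+(D:ℝ))*(k:ℝ)) := by
      rw [← Real.rpow_natCast ((β^m*R₀) ^ (2*d+(D:ℝ))) k,
        ← Real.rpow_mul hRmpos.le, Real.mul_rpow (by positivity) hR₀pos.le]
      rw [← Real.rpow_natCast β m, ← Real.rpow_mul hβ0.le]
      have hexp2 : (m:ℝ) * ((2*d+(D:ℝ))*(k:ℝ)) = (2*d+(D:ℝ))*(k:ℝ)*(m:ℝ) := by ring
      rw [hexp2]
    calc f (β^m*R₀)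
        ≤ (Nat.factorial k : ℝ) * (CC^2*((β^m*R₀+1)^d)^2*(C₂*(β^m*R₀)^D))^k := h1
      _ ≤ (Nat.factorial k : ℝ) * (A₀ * ((β^m*R₀) ^ (2*d+(D:ℝ))))^k :=
          mul_le_mul_of_nonneg_left h2 (by positivity)
      _ = B * β ^ ((2*d+(D:ℝ)) * (k:ℝ) * (m:ℝ)) := by
          rw [mul_pow, h4, hBdef]; ring
  -- final contradiction
  have hfR₀ : 0 < f R₀ := hfposd R₀ (le_trans hR₁' hR₀gt.le)
  have hcontr : ∀ m : ℕ, β ^ (δ * (k:ℝ) * (m:ℝ)) ≤ B / f R₀ := by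
    intro m
    have h3 : β ^ (c * (k:ℝ) * (m:ℝ))
        = β ^ ((2*d+(D:ℝ)) * (k:ℝ) * (m:ℝ)) * β ^ (δ * (k:ℝ) * (m:ℝ)) := by
      rw [← Real.rpow_add hβ0]
      congr 1
      rw [hc]; ring
    have h5 : β ^ ((2*d+(D:ℝ))*(k:ℝ)*(m:ℝ)) * (β ^ (δ*(k:ℝ)*(m:ℝ)) * f R₀)
        ≤ β ^ ((2*d+(D:ℝ))*(k:ℝ)*(m:ℝ)) * B := by
      calc β ^ ((2*d+(D:ℝ))*(k:ℝ)*(m:ℝ)) * (β ^ (δ*(k:ℝ)*(m:ℝ)) * f R₀)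
          = β ^ (c * (k:ℝ) * (m:ℝ)) * f R₀ := by rw [h3]; ring
        _ ≤ f (β^m * R₀) := hiter m
        _ ≤ B * β ^ ((2*d+(D:ℝ))*(k:ℝ)*(m:ℝ)) := hfinal m
        _ = β ^ ((2*d+(D:ℝ))*(k:ℝ)*(m:ℝ)) * B := mul_comm _ _
    have h6 : β ^ (δ*(k:ℝ)*(m:ℝ)) * f R₀ ≤ B :=
      le_of_mul_le_mul_left h5 (Real.rpow_pos_of_pos hβ0 _)
    exact (le_div_iff₀ hfR₀).mpr h6
  have hγ : (1:ℝ) < β ^ (δ * (k:ℝ)) :=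
    (Real.one_lt_rpow_iff_of_pos hβ0).mpr (Or.inl ⟨hβ, mul_pos hδ hk0⟩)
  obtain ⟨m, hm⟩ := pow_unbounded_of_one_lt (B / f R₀) hγ
  have h7 : (β ^ (δ*(k:ℝ))) ^ m = β ^ (δ * (k:ℝ) * (m:ℝ)) := by
    rw [← Real.rpow_natCast (β ^ (δ*(k:ℝ))) m, ← Real.rpow_mul hβ0.le]
  rw [h7] at hm
  exact absurd (hcontr m) (not_le.mpr hm)
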